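/- There is no Hamiltonian of a cubic Kolmogorov vector field on S¹×S²: if χ = (x₁ψ₁, x₂ψ₂, x₃ψ₃, x₄ψ₄) is a vector field on S¹×S² with each ψᵢ ∈ ℝ[x₁,x₂,x₃,x₄] of degree at most 2, then there is no nonconstant polynomial H ∈ ℝ[x₁,x₂,x₃,x₄] satisfying x₁ψ₁ = −∂H/∂x₂, x₂ψ₂ = ∂H/∂x₁, x₃ψ₃ = −∂H/∂x₄ and x₄ψ₄ = ∂H/∂x₃. -/

import Mathlib

open MvPolynomial

/-- The action of the polynomial vector field `χ = (P 0, P 1, P 2, P 3)` on a polynomial: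
`χf = Σᵢ Pᵢ ∂f/∂xᵢ`. -/
noncomputable def chi (P : Fin 4 → MvPolynomial (Fin 4) ℝ)
    (f : MvPolynomial (Fin 4) ℝ) : MvPolynomial (Fin 4) ℝ :=
  ∑ i, P i * pderiv i f

/-- `G_a = (x₁² + x₂² - a²)² + x₃² + x₄² - 1`, whose zero set is `S¹ × S²`. -/
noncomputable def Ga (a : ℝ) : MvPolynomial (Fin 4) ℝ :=
  (X 0 ^ 2 + X 1 ^ 2 - C (a ^ 2)) ^ 2 + X 2 ^ 2 + X 3 ^ 2 - 1

lemma coeff_pderiv (i : Fin 4) (f : MvPolynomial (Fin 4) ℝ) (m : Fin 4 →₀ ℕ) :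
    coeff m (pderiv i f) = (m i + 1 : ℝ) * coeff (m + Finsupp.single i 1) f := by
  induction f using MvPolynomial.induction_on' with
  | monomial u a =>
    rw [pderiv_monomial]
    by_cases h : u = m + Finsupp.single i 1
    · subst h
      rw [coeff_monomial, coeff_monomial, if_pos rfl, if_pos (add_tsub_cancel_right _ _)]
      simp [mul_comm]
    · rw [coeff_monomial, coeff_monomial, if_neg h]
      rcases Nat.eq_zero_or_pos (u i) with h0 | h0
      · split_ifs with h1
        · simp [h0]
        · ring
      · have : u - Finsupp.single i 1 ≠ m := by
          intro hm
          apply h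
          rw [← hm, tsub_add_cancel_of_le]
          rwa [Finsupp.single_le_iff]
        rw [if_neg this]; ring
  | add p q hp hq => simp [hp, hq, mul_add]

noncomputable def ee (i j k l : ℕ) : Fin 4 →₀ ℕ :=
  Finsupp.single 0 i + Finsupp.single 1 j + Finsupp.single 2 k + Finsupp.single 3 l

lemma ee_apply0 (i j k l : ℕ) : ee i j k l 0 = i := by simp [ee, Finsupp.single_apply]
lemma ee_apply1 (i j k l : ℕ) : ee i j k l 1 = j := by simp [ee, Finsupp.single_apply]
lemma ee_apply2 (i j k l : ℕ) : ee i j k l 2 = k := by simp [ee, Finsupp.single_apply]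
lemma ee_apply3 (i j k l : ℕ) : ee i j k l 3 = l := by simp [ee, Finsupp.single_apply]

lemma self_eq_ee (m : Fin 4 →₀ ℕ) : m = ee (m 0) (m 1) (m 2) (m 3) := by
  ext x
  fin_cases x
  · exact (ee_apply0 _ _ _ _).symm
  · exact (ee_apply1 _ _ _ _).symm
  · exact (ee_apply2 _ _ _ _).symm
  · exact (ee_apply3 _ _ _ _).symm

lemma ee_eq_ee {i j k l i' j' k' l' : ℕ} :
    ee i j k l = ee i' j' k' l' ↔ i = i' ∧ j = j' ∧ k = k' ∧ l = l' := by
  constructor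
  · intro h
    refine ⟨?_, ?_, ?_, ?_⟩
    · have := DFunLike.congr_fun h 0; simpa [ee_apply0] using this
    · have := DFunLike.congr_fun h 1; simpa [ee_apply1] using this
    · have := DFunLike.congr_fun h 2; simpa [ee_apply2] using this
    · have := DFunLike.congr_fun h 3; simpa [ee_apply3] using this
  · rintro ⟨rfl, rfl, rfl, rfl⟩; rfl

lemma monomial_ee (i j k l : ℕ) (r : ℝ) :
    (monomial (ee i j k l) r : MvPolynomial (Fin 4) ℝ)
      = C r * X 0 ^ i * X 1 ^ j * X 2 ^ k * X 3 ^ l := by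
  rw [monomial_eq]
  rw [Finsupp.prod_fintype _ _ (fun _ => pow_zero _)]
  rw [Fin.prod_univ_four]
  rw [ee_apply0, ee_apply1, ee_apply2, ee_apply3]
  ring

lemma sum4 (m : Fin 4 →₀ ℕ) : m.sum (fun _ n => n) = m 0 + m 1 + m 2 + m 3 := by
  rw [Finsupp.sum_fintype _ _ (fun _ => rfl), Fin.sum_univ_four]

lemma sub_single_apply (m : Fin 4 →₀ ℕ) (i j : Fin 4) :
    (m - Finsupp.single i 1 : Fin 4 →₀ ℕ) j = m j - (if i = j then 1 else 0) := by
  rw [Finsupp.tsub_apply, Finsupp.single_apply]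

lemma enum14 (i j k l : ℕ) (h01 : 1 ≤ i ↔ 1 ≤ j) (h23 : 1 ≤ k ↔ 1 ≤ l)
    (h4 : i + j + k + l ≤ 4 ∨ (i = 0 ∧ j = 0 ∧ k = 0 ∧ l = 0)) :
    (i = 0 ∧ j = 0 ∧ k = 0 ∧ l = 0) ∨ (i = 1 ∧ j = 1 ∧ k = 0 ∧ l = 0) ∨
    (i = 2 ∧ j = 1 ∧ k = 0 ∧ l = 0) ∨ (i = 1 ∧ j = 2 ∧ k = 0 ∧ l = 0) ∨
    (i = 3 ∧ j = 1 ∧ k = 0 ∧ l = 0) ∨ (i = 2 ∧ j = 2 ∧ k = 0 ∧ l = 0) ∨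
    (i = 1 ∧ j = 3 ∧ k = 0 ∧ l = 0) ∨ (i = 0 ∧ j = 0 ∧ k = 1 ∧ l = 1) ∨
    (i = 0 ∧ j = 0 ∧ k = 2 ∧ l = 1) ∨ (i = 0 ∧ j = 0 ∧ k = 1 ∧ l = 2) ∨
    (i = 0 ∧ j = 0 ∧ k = 3 ∧ l = 1) ∨ (i = 0 ∧ j = 0 ∧ k = 2 ∧ l = 2) ∨
    (i = 0 ∧ j = 0 ∧ k = 1 ∧ l = 3) ∨ (i = 1 ∧ j = 1 ∧ k = 1 ∧ l = 1) := by
  rcases (by omega : (i = 0 ∧ j = 0) ∨ (1 ≤ i ∧ 1 ≤ j)) with ⟨hi, hj⟩ | ⟨hi, hj⟩ <;>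
    rcases (by omega : (k = 0 ∧ l = 0) ∨ (1 ≤ k ∧ 1 ≤ l)) with ⟨hk, hl⟩ | ⟨hk, hl⟩
  · exact Or.inl ⟨hi, hj, hk, hl⟩
  · subst hi; subst hj
    have hk3 : k ≤ 3 := by omega
    have hl3 : l ≤ 3 := by omega
    have hs : k + l ≤ 4 := by omega
    interval_cases k <;> interval_cases l <;> first | decide | omega
  · subst hk; subst hl
    have hi3 : i ≤ 3 := by omega
    have hj3 : j ≤ 3 := by omega
    have hs : i + j ≤ 4 := by omega
    interval_cases i <;> interval_cases j <;> first | decide | omega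
  · have h14 : i = 1 ∧ j = 1 ∧ k = 1 ∧ l = 1 := by omega
    obtain ⟨r1, r2, r3, r4⟩ := h14
    subst r1; subst r2; subst r3; subst r4
    decide

lemma ite_coeff_zero (H : MvPolynomial (Fin 4) ℝ) (m u : Fin 4 →₀ ℕ)
    (hm : coeff m H = 0) : (if u = m then coeff u H else 0) = 0 := by
  split_ifs with h
  · rw [h, hm]
  · rfl

set_option maxHeartbeats 2000000 in
theorem stmt_6 (a : ℝ) (ha : 1 < a) (ψ : Fin 4 → MvPolynomial (Fin 4) ℝ)
    (hdeg : ∀ i, (ψ i).totalDegree ≤ 2)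
    (hvf : ∃ K : MvPolynomial (Fin 4) ℝ,
      chi (fun i => X i * ψ i) (Ga a) = K * Ga a) :
    ¬ ∃ H : MvPolynomial (Fin 4) ℝ, (¬ ∃ c : ℝ, H = C c) ∧
      X 0 * ψ 0 = -(pderiv 1 H) ∧
      X 1 * ψ 1 = pderiv 0 H ∧
      X 2 * ψ 2 = -(pderiv 3 H) ∧
      X 3 * ψ 3 = pderiv 2 H := by
  rintro ⟨H, hH1, hh2, hh3, hh4, hh5⟩
  obtain ⟨K, hK⟩ := hvf
  simp only [chi, Fin.sum_univ_four] at hK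
  rw [hh2, hh3, hh4, hh5] at hK
  -- facts about the four partial derivatives
  have hp0 : pderiv 0 H = X 1 * ψ 1 := hh3.symm
  have hp1 : pderiv 1 H = -(X 0 * ψ 0) := by rw [hh2, neg_neg]
  have hp2 : pderiv 2 H = X 3 * ψ 3 := hh5.symm
  have hp3 : pderiv 3 H = -(X 2 * ψ 2) := by rw [hh4, neg_neg]
  have key_shift : ∀ (i : Fin 4) (m : Fin 4 →₀ ℕ), 1 ≤ m i → coeff m H ≠ 0 →
      coeff (m - Finsupp.single i 1) (pderiv i H) ≠ 0 := by
    intro i m hi hm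
    have hle : Finsupp.single i 1 ≤ m := by rwa [Finsupp.single_le_iff]
    rw [coeff_pderiv, tsub_add_cancel_of_le hle]
    apply mul_ne_zero _ hm
    have h1 : (0:ℝ) < (((m - Finsupp.single i 1 : Fin 4 →₀ ℕ) i : ℕ) : ℝ) + 1 := by positivity
    exact h1.ne'
  have hXmul : ∀ (j : Fin 4) (g : MvPolynomial (Fin 4) ℝ) (n : Fin 4 →₀ ℕ),
      coeff n (X j * g) ≠ 0 → 1 ≤ n j := by
    intro j g n hn
    rw [coeff_X_mul'] at hn
    by_contra hc
    apply hn
    rw [if_neg]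
    simp only [Finsupp.mem_support_iff]
    omega
  have hpair01 : ∀ m : Fin 4 →₀ ℕ, coeff m H ≠ 0 → (1 ≤ m 0 ↔ 1 ≤ m 1) := by
    intro m hm
    constructor
    · intro h0
      have h := key_shift 0 m h0 hm
      rw [hp0] at h
      have := hXmul 1 (ψ 1) _ h
      rw [sub_single_apply] at this
      simpa using this
    · intro h1
      have h := key_shift 1 m h1 hm
      rw [hp1, coeff_neg] at h
      rw [neg_ne_zero] at h
      have := hXmul 0 (ψ 0) _ h
      rw [sub_single_apply] at this
      simpa using this
  have hpair23 : ∀ m : Fin 4 →₀ ℕ, coeff m H ≠ 0 → (1 ≤ m 2 ↔ 1 ≤ m 3) := by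
    intro m hm
    constructor
    · intro h2
      have h := key_shift 2 m h2 hm
      rw [hp2] at h
      have := hXmul 3 (ψ 3) _ h
      rw [sub_single_apply] at this
      simpa using this
    · intro h3
      have h := key_shift 3 m h3 hm
      rw [hp3, coeff_neg] at h
      rw [neg_ne_zero] at h
      have := hXmul 2 (ψ 2) _ h
      rw [sub_single_apply] at this
      simpa using this
  have hb0 : (pderiv (0:Fin 4) H).totalDegree ≤ 3 := by
    rw [hp0]
    refine (totalDegree_mul _ _).trans ?_
    rw [totalDegree_X]
    have := hdeg 1; omega
  have hb1 : (pderiv (1:Fin 4) H).totalDegree ≤ 3 := by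
    rw [hp1, totalDegree_neg]
    refine (totalDegree_mul _ _).trans ?_
    rw [totalDegree_X]
    have := hdeg 0; omega
  have hb2 : (pderiv (2:Fin 4) H).totalDegree ≤ 3 := by
    rw [hp2]
    refine (totalDegree_mul _ _).trans ?_
    rw [totalDegree_X]
    have := hdeg 3; omega
  have hb3 : (pderiv (3:Fin 4) H).totalDegree ≤ 3 := by
    rw [hp3, totalDegree_neg]
    refine (totalDegree_mul _ _).trans ?_
    rw [totalDegree_X]
    have := hdeg 2; omega
  have hdeg4 : ∀ m : Fin 4 →₀ ℕ, coeff m H ≠ 0 →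
      m 0 + m 1 + m 2 + m 3 ≤ 4 ∨ (m 0 = 0 ∧ m 1 = 0 ∧ m 2 = 0 ∧ m 3 = 0) := by
    intro m hm
    by_cases h0 : m 0 = 0 ∧ m 1 = 0 ∧ m 2 = 0 ∧ m 3 = 0
    · exact Or.inr h0
    · left
      rcases (by omega : 1 ≤ m 0 ∨ 1 ≤ m 1 ∨ 1 ≤ m 2 ∨ 1 ≤ m 3) with h | h | h | h
      · have hcf := key_shift 0 m h hm
        have hle := (MvPolynomial.le_totalDegree
          (MvPolynomial.mem_support_iff.mpr hcf)).trans hb0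
        rw [sum4] at hle
        simp only [sub_single_apply] at hle
        simp at hle
        omega
      · have hcf := key_shift 1 m h hm
        have hle := (MvPolynomial.le_totalDegree
          (MvPolynomial.mem_support_iff.mpr hcf)).trans hb1
        rw [sum4] at hle
        simp only [sub_single_apply] at hle
        simp at hle
        omega
      · have hcf := key_shift 2 m h hm
        have hle := (MvPolynomial.le_totalDegree
          (MvPolynomial.mem_support_iff.mpr hcf)).trans hb2
        rw [sum4] at hle
        simp only [sub_single_apply] at hle
        simp at hle
        omega
      · have hcf := key_shift 3 m h hm
        have hle := (MvPolynomial.le_totalDegree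
          (MvPolynomial.mem_support_iff.mpr hcf)).trans hb3
        rw [sum4] at hle
        simp only [sub_single_apply] at hle
        simp at hle
        omega
  have hmem : ∀ m : Fin 4 →₀ ℕ, coeff m H ≠ 0 →
      m = ee 0 0 0 0 ∨ m = ee 1 1 0 0 ∨ m = ee 2 1 0 0 ∨ m = ee 1 2 0 0 ∨ m = ee 3 1 0 0 ∨ m = ee 2 2 0 0 ∨ m = ee 1 3 0 0 ∨ m = ee 0 0 1 1 ∨ m = ee 0 0 2 1 ∨ m = ee 0 0 1 2 ∨ m = ee 0 0 3 1 ∨ m = ee 0 0 2 2 ∨ m = ee 0 0 1 3 ∨ m = ee 1 1 1 1 := by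
    intro m hm
    have h01 := hpair01 m hm
    have h23 := hpair23 m hm
    have h4 := hdeg4 m hm
    have hr := self_eq_ee m
    rw [hr]
    simp only [ee_eq_ee]
    exact enum14 (m 0) (m 1) (m 2) (m 3) h01 h23 h4
  have hrep : H = monomial (ee 0 0 0 0) (coeff (ee 0 0 0 0) H)
      + monomial (ee 1 1 0 0) (coeff (ee 1 1 0 0) H)
      + monomial (ee 2 1 0 0) (coeff (ee 2 1 0 0) H)
      + monomial (ee 1 2 0 0) (coeff (ee 1 2 0 0) H)
      + monomial (ee 3 1 0 0) (coeff (ee 3 1 0 0) H)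
      + monomial (ee 2 2 0 0) (coeff (ee 2 2 0 0) H)
      + monomial (ee 1 3 0 0) (coeff (ee 1 3 0 0) H)
      + monomial (ee 0 0 1 1) (coeff (ee 0 0 1 1) H)
      + monomial (ee 0 0 2 1) (coeff (ee 0 0 2 1) H)
      + monomial (ee 0 0 1 2) (coeff (ee 0 0 1 2) H)
      + monomial (ee 0 0 3 1) (coeff (ee 0 0 3 1) H)
      + monomial (ee 0 0 2 2) (coeff (ee 0 0 2 2) H)
      + monomial (ee 0 0 1 3) (coeff (ee 0 0 1 3) H)
      + monomial (ee 1 1 1 1) (coeff (ee 1 1 1 1) H) := by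
    refine MvPolynomial.ext _ _ fun m => ?_
    simp only [coeff_add, coeff_monomial]
    by_cases hm : coeff m H = 0
    · rw [hm]
      rw [ite_coeff_zero H m (ee 0 0 0 0) hm]
      rw [ite_coeff_zero H m (ee 1 1 0 0) hm]
      rw [ite_coeff_zero H m (ee 2 1 0 0) hm]
      rw [ite_coeff_zero H m (ee 1 2 0 0) hm]
      rw [ite_coeff_zero H m (ee 3 1 0 0) hm]
      rw [ite_coeff_zero H m (ee 2 2 0 0) hm]
      rw [ite_coeff_zero H m (ee 1 3 0 0) hm]
      rw [ite_coeff_zero H m (ee 0 0 1 1) hm]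
      rw [ite_coeff_zero H m (ee 0 0 2 1) hm]
      rw [ite_coeff_zero H m (ee 0 0 1 2) hm]
      rw [ite_coeff_zero H m (ee 0 0 3 1) hm]
      rw [ite_coeff_zero H m (ee 0 0 2 2) hm]
      rw [ite_coeff_zero H m (ee 0 0 1 3) hm]
      rw [ite_coeff_zero H m (ee 1 1 1 1) hm]
      norm_num
    · rcases hmem m hm with h|h|h|h|h|h|h|h|h|h|h|h|h|h
      all_goals (subst h; simp [ee_eq_ee])
  rw [monomial_ee 0 0 0 0, monomial_ee 1 1 0 0, monomial_ee 2 1 0 0, monomial_ee 1 2 0 0, monomial_ee 3 1 0 0, monomial_ee 2 2 0 0, monomial_ee 1 3 0 0, monomial_ee 0 0 1 1, monomial_ee 0 0 2 1, monomial_ee 0 0 1 2, monomial_ee 0 0 3 1, monomial_ee 0 0 2 2, monomial_ee 0 0 1 3, monomial_ee 1 1 1 1] at hrep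
  set c0 := coeff (ee 0 0 0 0) H with hc0def
  set c11 := coeff (ee 1 1 0 0) H with hc11def
  set c21 := coeff (ee 2 1 0 0) H with hc21def
  set c12 := coeff (ee 1 2 0 0) H with hc12def
  set c31 := coeff (ee 3 1 0 0) H with hc31def
  set c22 := coeff (ee 2 2 0 0) H with hc22def
  set c13 := coeff (ee 1 3 0 0) H with hc13def
  set e11 := coeff (ee 0 0 1 1) H with he11def
  set e21 := coeff (ee 0 0 2 1) H with he21def
  set e12 := coeff (ee 0 0 1 2) H with he12def
  set e31 := coeff (ee 0 0 3 1) H with he31def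
  set e22 := coeff (ee 0 0 2 2) H with he22def
  set e13 := coeff (ee 0 0 1 3) H with he13def
  set d := coeff (ee 1 1 1 1) H with hddef
  have master : ∀ x0 x1 x2 x3 : ℝ, (x0^2+x1^2-a^2)^2+x2^2+x3^2-1 = 0 →
      4*(x0^2+x1^2-a^2)*( c11*(x1^2-x0^2) + c21*(x0*(2*x1^2-x0^2)) + c12*(x1*(x1^2-2*x0^2))
        + c31*(x0^2*(3*x1^2-x0^2)) + c22*(2*(x0*(x1*x1^2)) - 2*(x0^2*(x0*x1)))
        + c13*(x1^2*(x1^2-3*x0^2)) + d*((x1^2-x0^2)*(x2*x3)))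
      + 2*( e11*(x3^2-x2^2) + e21*(x2*(2*x3^2-x2^2)) + e12*(x3*(x3^2-2*x2^2))
        + e31*(x2^2*(3*x3^2-x2^2)) + e22*(2*(x2*(x3*x3^2)) - 2*(x2^2*(x2*x3)))
        + e13*(x3^2*(x3^2-3*x2^2)) + d*((x3^2-x2^2)*(x0*x1))) = 0 := by
    intro x0 x1 x2 x3 hS
    have hEv := congrArg (eval ![x0, x1, x2, x3]) hK
    rw [hrep] at hEv
    simp only [Ga, map_add, map_sub, map_mul, map_neg, map_pow, map_one, map_zero, map_natCast, map_ofNat,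
      pderiv_mul, pderiv_pow, pderiv_C, pderiv_one, pderiv_X_self,
      pderiv_X_of_ne (show (1:Fin 4) ≠ 0 by decide),
      pderiv_X_of_ne (show (2:Fin 4) ≠ 0 by decide),
      pderiv_X_of_ne (show (3:Fin 4) ≠ 0 by decide),
      pderiv_X_of_ne (show (0:Fin 4) ≠ 1 by decide),
      pderiv_X_of_ne (show (2:Fin 4) ≠ 1 by decide),
      pderiv_X_of_ne (show (3:Fin 4) ≠ 1 by decide),
      pderiv_X_of_ne (show (0:Fin 4) ≠ 2 by decide),
      pderiv_X_of_ne (show (1:Fin 4) ≠ 2 by decide),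
      pderiv_X_of_ne (show (3:Fin 4) ≠ 2 by decide),
      pderiv_X_of_ne (show (0:Fin 4) ≠ 3 by decide),
      pderiv_X_of_ne (show (1:Fin 4) ≠ 3 by decide),
      pderiv_X_of_ne (show (2:Fin 4) ≠ 3 by decide),
      eval_C, eval_X, Matrix.cons_val_zero, Matrix.cons_val_one, Matrix.head_cons,
      Matrix.cons_val_two, Matrix.cons_val_three, Matrix.tail_cons,
      Nat.cast_ofNat, Nat.cast_zero, Nat.cast_one] at hEv
    linear_combination hEv + (eval ![x0, x1, x2, x3] K) * hS
  have ha0 : (0:ℝ) < a := lt_trans one_pos ha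
  have h1a : (1:ℝ) < a^2 := by nlinarith [mul_pos (lt_trans one_pos ha) (lt_trans one_pos ha)]
  set b := Real.sqrt (a^2+1) with hbdef
  have hb2 : b^2 = a^2+1 := Real.sq_sqrt (by positivity)
  have hbpos : 0 < b := Real.sqrt_pos.mpr (by positivity)
  set b' := Real.sqrt (a^2-1) with hbpdef
  have hbp2 : b'^2 = a^2-1 := Real.sq_sqrt (le_of_lt (sub_pos.mpr h1a))
  have hbppos : 0 < b' := Real.sqrt_pos.mpr (sub_pos.mpr h1a)
  set g := Real.sqrt (a^2+3/5) with hgdef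
  have hg2 : g^2 = a^2+3/5 := Real.sq_sqrt (by positivity)
  have F1 := master b 0 0 0 (by linear_combination (b^2-a^2+1) * hb2)
  have F2 := master (-b) 0 0 0 (by linear_combination (b^2-a^2+1) * hb2)
  have F3 := master 0 b 0 0 (by linear_combination (b^2-a^2+1) * hb2)
  have F4 := master 0 (-b) 0 0 (by linear_combination (b^2-a^2+1) * hb2)
  have F5 := master b' 0 0 0 (by linear_combination (b'^2-a^2-1) * hbp2)
  have F7 := master (3*b/5) (4*b/5) 0 0 (by linear_combination (b^2-a^2+1) * hb2)
  have F8 := master 0 a 1 0 (by ring)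
  have F9 := master 0 a (-1) 0 (by ring)
  have F10 := master 0 a 0 1 (by ring)
  have F11 := master 0 a 0 (-1) (by ring)
  have F12 := master 0 g (4/5) 0 (by linear_combination (g^2-a^2+3/5) * hg2)
  have F13 := master 0 a (3/5) (4/5) (by ring)
  have F14 := master (3*a/5) (4*a/5) (3/5) (4/5) (by ring)
  have hc21x : c21 * (b*(a^2+1)) = 0 := by linear_combination ((1/8)) * F2 + ((-1/8)) * F1 + ((-1)*b*c21 + (-1)*b^3*c21) * hb2
  have hc21 : c21 = 0 := by
    have hpos : (0:ℝ) < b*(a^2+1) := mul_pos hbpos (by positivity)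
    exact (mul_eq_zero.mp hc21x).resolve_right hpos.ne' 
  have hc12x : c12 * (b*(a^2+1)) = 0 := by linear_combination ((1/8)) * F3 + ((-1/8)) * F4 + ((-1)*b*c12 + (-1)*b^3*c12) * hb2
  have hc12 : c12 = 0 := by
    have hpos : (0:ℝ) < b*(a^2+1) := mul_pos hbpos (by positivity)
    exact (mul_eq_zero.mp hc12x).resolve_right hpos.ne' 
  have hc31x : c31 * (2*(a^2+1)*(a^2-1)) = 0 := by linear_combination ((1/8) + (-1/8)*a^2) * F1 + ((1/8) + (-1/8)*a^2) * F2 + ((-1/4) + (-1/4)*a^2) * F5 + (c31 + c11 + b^2*c31 + b^2*c11 + b^4*c31 + (-1)*a^2*c11 + (-1)*a^2*b^2*c31 + (-1)*a^2*b^2*c11 + (-1)*a^2*b^4*c31 + (-1)*a^4*c31) * hb2 + ((-1)*c31 + c11 + b'*c21 + b'^2*c31 + (-1)*b'^2*c11 + (-1)*b'^3*c21 + (-1)*b'^4*c31 + a^2*c11 + a^2*b'*c21 + a^2*b'^2*c31 + (-1)*a^2*b'^2*c11 + (-1)*a^2*b'^3*c21 + (-1)*a^2*b'^4*c31 + a^4*c31)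 * hbp2 + ((-1)*b' + a^4*b') * hc21
  have hc31 : c31 = 0 := by
    have hpos : (0:ℝ) < 2*(a^2+1)*(a^2-1) :=
      mul_pos (mul_pos two_pos (by positivity)) (sub_pos.mpr h1a)
    exact (mul_eq_zero.mp hc31x).resolve_right hpos.ne' 
  have hc11x : c11 * (a^2+1) = 0 := by linear_combination ((-1/8)) * F1 + ((-1/8)) * F2 + ((-1)*c31 + (-1)*c11 + (-1)*b^2*c31 + (-1)*b^2*c11 + (-1)*b^4*c31 + (-1)*a^2*c31) * hb2 + ((-1) + (-2)*a^2 + (-1)*a^4) * hc31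
  have hc11 : c11 = 0 := by
    have hpos : (0:ℝ) < a^2+1 := by positivity
    exact (mul_eq_zero.mp hc11x).resolve_right hpos.ne' 
  have hc13x : c13 * ((a^2+1)^2) = 0 := by linear_combination ((1/8)) * F3 + ((1/8)) * F4 + ((-1)*c13 + (-1)*c11 + (-1)*b^2*c13 + (-1)*b^2*c11 + (-1)*b^4*c13 + (-1)*a^2*c13) * hb2 + ((-1) + (-1)*a^2) * hc11
  have hc13 : c13 = 0 := by
    have hpos : (0:ℝ) < (a^2+1)^2 := by positivity
    exact (mul_eq_zero.mp hc13x).resolve_right hpos.ne' 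
  have hc22x : c22 * ((a^2+1)^2) = 0 := by linear_combination ((625/672)) * F7 + ((22/21)*c13 + (-1)*c22 + (-117/56)*c31 + (-25/24)*c11 + (5/21)*b*c12 + (-115/56)*b*c21 + (22/21)*b^2*c13 + (-1)*b^2*c22 + (-117/56)*b^2*c31 + (-25/24)*b^2*c11 + (5/21)*b^3*c12 + (-115/56)*b^3*c21 + (22/21)*b^4*c13 + (-1)*b^4*c22 + (-117/56)*b^4*c31 + (22/21)*a^2*c13 + (-1)*a^2*c22 + (-117/56)*a^2*c31) * hb2 + ((-115/56)*b + (-115/56)*a^2*b) * hc21 + ((5/21)*b + (5/21)*a^2*b) * hc12 + ((-117/56) + (-117/28)*a^2 + (-117/56)*a^4) * hc31 + ((-25/24) + (-25/24)*a^2) * hc11 + ((22/21) + (44/21)*a^2 + (22/21)*a^4) * hc13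
  have hc22 : c22 = 0 := by
    have hpos : (0:ℝ) < (a^2+1)^2 := by positivity
    exact (mul_eq_zero.mp hc22x).resolve_right hpos.ne' 
  have he21 : e21 = 0 := by linear_combination ((1/4)) * F9 + ((-1/4)) * F8
  have he12 : e12 = 0 := by linear_combination ((1/4)) * F10 + ((-1/4)) * F11
  have he31 : e31 = 0 := by linear_combination ((-25/36)) * F8 + ((-25/36)) * F9 + ((625/288)) * F12 + ((-25/8)*c13 + (-125/24)*c11 + (-125/24)*g*c12 + (-125/24)*g^2*c13 + (-625/72)*g^2*c11 + (-625/72)*g^3*c12 + (-625/72)*g^4*c13 + (-125/24)*a^2*c13) * hg2 + ((-25/8) + (-125/24)*a^2) * hc11 + ((-25/8)*g + (-125/24)*a^2*g) * hc12 + ((-15/8) + (-25/4)*a^2 + (-125/24)*a^4) * hc13 + ((20/9)) * he21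
  have he11 : e11 = 0 := by linear_combination ((-1/4)) * F8 + ((-1/4)) * F9 + ((-1)) * he31
  have he13 : e13 = 0 := by linear_combination ((1/4)) * F10 + ((1/4)) * F11 + ((-1)) * he11
  have he22 : e22 = 0 := by linear_combination ((625/336)) * F13 + ((-25/24)) * he11 + ((-115/56)) * he21 + ((5/21)) * he12 + ((-117/56)) * he31 + ((22/21)) * he13
  have hdx : d * a^2 = 0 := by linear_combination ((625/168)) * F14 + ((-25/12)) * he11 + ((-115/28)) * he21 + ((10/21)) * he12 + ((-117/28)) * he31 + ((44/21)) * he13 + ((-2)) * he22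
  have hd0 : d = 0 := by
    have hpos : (0:ℝ) < a^2 := pow_pos (lt_trans one_pos ha) 2
    exact (mul_eq_zero.mp hdx).resolve_right hpos.ne'
  exact hH1 ⟨c0, by rw [hrep, hc11, hc21, hc12, hc31, hc22, hc13,
    he11, he21, he12, he31, he22, he13, hd0]; simp⟩
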